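/- Let f ∈ C¹(ℝ^n) and x ≠ y in ℝ^n. Setting A = B((x+y)/2, |x−y|/2), one has |f(x) − f(y)| ≤ (|x−y|/|A|) [∫₀¹ ∫_A |Df(tx + (1−t)z)| dz dt + ∫₀¹ ∫_A |Df(ty + (1−t)z)| dz dt]. -/

import Mathlib

open MeasureTheory

lemma seg_bound (n : ℕ) (f : EuclideanSpace ℝ (Fin n) → ℝ) (hf : ContDiff ℝ 1 f)
    (a z : EuclideanSpace ℝ (Fin n)) (d : ℝ) (hd : ‖a - z‖ ≤ d) :
    |f a - f z| ≤ d * ∫ t in (0:ℝ)..1, ‖fderiv ℝ f (t • a + (1 - t) • z)‖ := by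
  have hdiff := hf.differentiable one_ne_zero
  set γ : ℝ → EuclideanSpace ℝ (Fin n) := fun t => t • a + (1 - t) • z with hγ
  have hγc : Continuous γ := by fun_prop
  have h1 : ∀ t : ℝ, HasDerivAt γ (a - z) t := by
    intro t
    have ha : HasDerivAt (fun s : ℝ => s • a) ((1:ℝ) • a) t :=
      (hasDerivAt_id t).smul_const a
    have hz : HasDerivAt (fun s : ℝ => (1 - s) • z) ((-1:ℝ) • z) t :=
      (((hasDerivAt_id t).const_sub 1)).smul_const z
    have hs := ha.add hz
    simp only [one_smul, neg_smul] at hs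
    rw [← sub_eq_add_neg] at hs
    exact hs
  have hder : ∀ t : ℝ, HasDerivAt (fun s => f (γ s)) ((fderiv ℝ f (γ t)) (a - z)) t :=
    fun t => ((hdiff (γ t)).hasFDerivAt).comp_hasDerivAt t (h1 t)
  have hdfc : Continuous fun t => fderiv ℝ f (γ t) :=
    (hf.continuous_fderiv one_ne_zero).comp hγc
  have hcont : Continuous fun t => (fderiv ℝ f (γ t)) (a - z) := by fun_prop
  have hFTC : f a - f z = ∫ t in (0:ℝ)..1, (fderiv ℝ f (γ t)) (a - z) := by
    have := intervalIntegral.integral_eq_sub_of_hasDerivAt (fun t _ => hder t)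
      (hcont.intervalIntegrable 0 1)
    simp only [hγ] at this
    simp only [one_smul, zero_smul, sub_self, zero_add, add_zero, sub_zero] at this
    linarith [this]
  rw [hFTC]
  have h2 : |∫ t in (0:ℝ)..1, (fderiv ℝ f (γ t)) (a - z)| ≤
      ∫ t in (0:ℝ)..1, ‖(fderiv ℝ f (γ t)) (a - z)‖ := by
    simpa [Real.norm_eq_abs] using
      intervalIntegral.norm_integral_le_integral_norm (f := fun t => (fderiv ℝ f (γ t)) (a - z)) (zero_le_one)
  refine h2.trans ?_
  rw [show d * ∫ t in (0:ℝ)..1, ‖fderiv ℝ f (t • a + (1 - t) • z)‖ =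
      ∫ t in (0:ℝ)..1, d * ‖fderiv ℝ f (γ t)‖ by
    rw [intervalIntegral.integral_const_mul]]
  apply intervalIntegral.integral_mono_on zero_le_one
  · exact (hcont.norm).intervalIntegrable 0 1
  · exact (continuous_const.mul hdfc.norm).intervalIntegrable 0 1
  · intro t _
    calc ‖(fderiv ℝ f (γ t)) (a - z)‖ ≤ ‖fderiv ℝ f (γ t)‖ * ‖a - z‖ :=
          (fderiv ℝ f (γ t)).le_opNorm _
      _ ≤ d * ‖fderiv ℝ f (γ t)‖ := by
          nlinarith [norm_nonneg (fderiv ℝ f (γ t)), norm_nonneg (a - z)]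

lemma prod_integrable (n : ℕ) (f : EuclideanSpace ℝ (Fin n) → ℝ) (hf : ContDiff ℝ 1 f)
    (x m : EuclideanSpace ℝ (Fin n)) (r : ℝ) :
    Integrable (fun p : ℝ × EuclideanSpace ℝ (Fin n) =>
      ‖fderiv ℝ f (p.1 • x + (1 - p.1) • p.2)‖)
      ((volume.restrict (Set.Ioc (0:ℝ) 1)).prod (volume.restrict (Metric.ball m r))) := by
  rw [Measure.prod_restrict]
  have hc : Continuous (fun p : ℝ × EuclideanSpace ℝ (Fin n) =>
      ‖fderiv ℝ f (p.1 • x + (1 - p.1) • p.2)‖) := by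
    have := hf.continuous_fderiv one_ne_zero
    fun_prop
  have hK : IsCompact (Set.Icc (0:ℝ) 1 ×ˢ Metric.closedBall m r) :=
    isCompact_Icc.prod (isCompact_closedBall m r)
  exact (hc.continuousOn.integrableOn_compact hK).mono_set
    (Set.prod_mono Set.Ioc_subset_Icc_self Metric.ball_subset_closedBall)

/-- averaging estimate over the midpoint ball for `C¹` functions. -/
theorem midpoint_ball_averaging (n : ℕ) (f : EuclideanSpace ℝ (Fin n) → ℝ)
    (hf : ContDiff ℝ 1 f) (x y : EuclideanSpace ℝ (Fin n)) (hxy : x ≠ y) :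
    |f x - f y| ≤
      (‖x - y‖ / (volume (Metric.ball ((1 / 2 : ℝ) • (x + y)) (‖x - y‖ / 2))).toReal) *
        ((∫ t in (0:ℝ)..1, ∫ z in Metric.ball ((1 / 2 : ℝ) • (x + y)) (‖x - y‖ / 2),
            ‖fderiv ℝ f (t • x + (1 - t) • z)‖) +
         (∫ t in (0:ℝ)..1, ∫ z in Metric.ball ((1 / 2 : ℝ) • (x + y)) (‖x - y‖ / 2),
            ‖fderiv ℝ f (t • y + (1 - t) • z)‖)) := by
  set m : EuclideanSpace ℝ (Fin n) := (1 / 2 : ℝ) • (x + y) with hm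
  set d : ℝ := ‖x - y‖ with hdd
  set r : ℝ := d / 2 with hr
  set A : Set (EuclideanSpace ℝ (Fin n)) := Metric.ball m r with hA
  have hd0 : 0 < d := norm_pos_iff.mpr (sub_ne_zero.mpr hxy)
  have hr0 : 0 < r := by positivity
  have hV0 : 0 < (volume A).toReal := by
    refine ENNReal.toReal_pos (ne_of_gt (Metric.measure_ball_pos volume m hr0)) ?_
    exact (measure_ball_lt_top).ne
  -- distance bounds
  have hxm : ‖x - m‖ = r := by
    have : x - m = (1/2 : ℝ) • (x - y) := by rw [hm]; module
    rw [this, norm_smul]; simp [hr, hdd]; ring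
  have hym : ‖y - m‖ = r := by
    have : y - m = (-(1/2) : ℝ) • (x - y) := by rw [hm]; module
    rw [this, norm_smul]; simp [hr, hdd]; ring
  have hdistx : ∀ z ∈ A, ‖x - z‖ ≤ d := by
    intro z hz
    have hz' : ‖z - m‖ < r := by simpa [hA, Metric.mem_ball, dist_eq_norm] using hz
    calc ‖x - z‖ = ‖(x - m) + (m - z)‖ := by abel_nf
      _ ≤ ‖x - m‖ + ‖m - z‖ := norm_add_le _ _
      _ ≤ r + r := by rw [hxm, norm_sub_rev]; linarith
      _ = d := by rw [hr]; ring
  have hdisty : ∀ z ∈ A, ‖y - z‖ ≤ d := by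
    intro z hz
    have hz' : ‖z - m‖ < r := by simpa [hA, Metric.mem_ball, dist_eq_norm] using hz
    calc ‖y - z‖ = ‖(y - m) + (m - z)‖ := by abel_nf
      _ ≤ ‖y - m‖ + ‖m - z‖ := norm_add_le _ _
      _ ≤ r + r := by rw [hym, norm_sub_rev]; linarith
      _ = d := by rw [hr]; ring
  -- the inner t-integrals
  set Jx : EuclideanSpace ℝ (Fin n) → ℝ :=
    fun z => ∫ t in (0:ℝ)..1, ‖fderiv ℝ f (t • x + (1 - t) • z)‖ with hJx
  set Jy : EuclideanSpace ℝ (Fin n) → ℝ :=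
    fun z => ∫ t in (0:ℝ)..1, ‖fderiv ℝ f (t • y + (1 - t) • z)‖ with hJy
  have hFx := prod_integrable n f hf x m r
  have hFy := prod_integrable n f hf y m r
  -- interval integral = Ioc integral
  have hJx' : ∀ z, Jx z = ∫ t in Set.Ioc (0:ℝ) 1, ‖fderiv ℝ f (t • x + (1 - t) • z)‖ :=
    fun z => intervalIntegral.integral_of_le zero_le_one
  have hJy' : ∀ z, Jy z = ∫ t in Set.Ioc (0:ℝ) 1, ‖fderiv ℝ f (t • y + (1 - t) • z)‖ :=
    fun z => intervalIntegral.integral_of_le zero_le_one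
  -- integrability of J on A
  have hJxint : IntegrableOn Jx A volume := by
    have := hFx.swap.integral_prod_left
    refine (Integrable.congr this ?_)
    filter_upwards with z
    rw [hJx']; rfl
  have hJyint : IntegrableOn Jy A volume := by
    have := hFy.swap.integral_prod_left
    refine (Integrable.congr this ?_)
    filter_upwards with z
    rw [hJy']; rfl
  -- continuity-based integrability of z ↦ |f x - f z| etc. on A
  have habs : ∀ a : EuclideanSpace ℝ (Fin n),
      IntegrableOn (fun z => |f a - f z|) A volume := by
    intro a
    have hc : Continuous fun z : EuclideanSpace ℝ (Fin n) => |f a - f z| := by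
      have := hf.continuous; fun_prop
    exact ((hc.continuousOn.integrableOn_compact (isCompact_closedBall m r)).mono_set
      Metric.ball_subset_closedBall)
  -- key averaged inequality
  have key : (volume A).toReal * |f x - f y| ≤
      d * ((∫ z in A, Jx z) + (∫ z in A, Jy z)) := by
    have step1 : (volume A).toReal * |f x - f y| = ∫ z in A, |f x - f y| := by
      rw [setIntegral_const]; simp [smul_eq_mul]; left; rfl
    have step2 : (∫ z in A, |f x - f y|) ≤ ∫ z in A, (|f x - f z| + |f y - f z|) := by
      refine setIntegral_mono_on (integrableOn_const measure_ball_lt_top.ne)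
        ((habs x).add (habs y)) measurableSet_ball ?_
      intro z _
      calc |f x - f y| ≤ |f x - f z| + |f z - f y| := abs_sub_le _ _ _
        _ = |f x - f z| + |f y - f z| := by rw [abs_sub_comm (f z)]
    have step3 : (∫ z in A, (|f x - f z| + |f y - f z|)) ≤
        ∫ z in A, (d * Jx z + d * Jy z) := by
      refine setIntegral_mono_on ((habs x).add (habs y))
        (((hJxint.const_mul d)).add ((hJyint.const_mul d))) measurableSet_ball ?_
      intro z hz
      have h1 := seg_bound n f hf x z d (hdistx z hz)
      have h2 := seg_bound n f hf y z d (hdisty z hz)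
      exact add_le_add h1 h2
    have step4 : (∫ z in A, (d * Jx z + d * Jy z)) =
        d * ((∫ z in A, Jx z) + (∫ z in A, Jy z)) := by
      rw [integral_add ((hJxint.const_mul d)) ((hJyint.const_mul d)),
        integral_const_mul, integral_const_mul]
      ring
    linarith [step1, step2, step3, step4.le, step4.ge]
  -- Fubini to swap order
  have fub : ∀ (a : EuclideanSpace ℝ (Fin n)),
      Integrable (fun p : ℝ × EuclideanSpace ℝ (Fin n) =>
        ‖fderiv ℝ f (p.1 • a + (1 - p.1) • p.2)‖)
        ((volume.restrict (Set.Ioc (0:ℝ) 1)).prod (volume.restrict A)) →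
      (∫ z in A, ∫ t in Set.Ioc (0:ℝ) 1, ‖fderiv ℝ f (t • a + (1 - t) • z)‖) =
      ∫ t in Set.Ioc (0:ℝ) 1, ∫ z in A, ‖fderiv ℝ f (t • a + (1 - t) • z)‖ := by
    intro a hInt
    exact (integral_integral_swap hInt).symm
  have fubx := fub x hFx
  have fuby := fub y hFy
  have hIx : (∫ z in A, Jx z) =
      ∫ t in (0:ℝ)..1, ∫ z in A, ‖fderiv ℝ f (t • x + (1 - t) • z)‖ := by
    rw [intervalIntegral.integral_of_le zero_le_one]
    rw [← fubx]
    exact setIntegral_congr_fun measurableSet_ball (fun z _ => hJx' z)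
  have hIy : (∫ z in A, Jy z) =
      ∫ t in (0:ℝ)..1, ∫ z in A, ‖fderiv ℝ f (t • y + (1 - t) • z)‖ := by
    rw [intervalIntegral.integral_of_le zero_le_one]
    rw [← fuby]
    exact setIntegral_congr_fun measurableSet_ball (fun z _ => hJy' z)
  rw [← hIx, ← hIy, div_mul_eq_mul_div, le_div_iff₀ hV0]
  calc |f x - f y| * (volume A).toReal = (volume A).toReal * |f x - f y| := mul_comm _ _
    _ ≤ d * ((∫ z in A, Jx z) + (∫ z in A, Jy z)) := key
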